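/- Every coefficient of the Geode G is a nonnegative integer; that is, for every finitely supported monomial exponent function m, the coefficient of the corresponding monomial in G lies in the image of ℕ in ℚ. -/

import Mathlib

/- `R = MvPowerSeries ℕ ℚ`, with the product (coefficientwise) topology. -/
noncomputable instance : TopologicalSpace (MvPowerSeries ℕ ℚ) :=
  inferInstanceAs (TopologicalSpace ((ℕ →₀ ℕ) → ℚ))

open MvPowerSeries

namespace GeodeAux

instance : T2Space (MvPowerSeries ℕ ℚ) := inferInstanceAs (T2Space ((ℕ →₀ ℕ) → ℚ))
instance : ContinuousAdd (MvPowerSeries ℕ ℚ) :=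
  inferInstanceAs (ContinuousAdd ((ℕ →₀ ℕ) → ℚ))

/-- The subsemiring of `ℚ` consisting of natural numbers. -/
def Rng : Subsemiring ℚ := (Nat.castRingHom ℚ).rangeS

lemma natCast_mem_Rng (n : ℕ) : (n : ℚ) ∈ Rng := ⟨n, rfl⟩

/-- Total degree of a monomial exponent. -/
def deg (m : ℕ →₀ ℕ) : ℕ := m.sum fun _ e => e

lemma deg_add (p q : ℕ →₀ ℕ) : deg (p + q) = deg p + deg q :=
  Finsupp.sum_add_index' (fun _ => rfl) (fun _ _ _ => rfl)

lemma eq_zero_of_deg_eq_zero {m : ℕ →₀ ℕ} (h : deg m = 0) : m = 0 := by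
  ext a
  by_cases ha : a ∈ m.support
  · exact Finset.sum_eq_zero_iff.1 h a ha
  · simpa using Finsupp.notMem_support_iff.1 ha

lemma deg_le_of_le {p m : ℕ →₀ ℕ} (h : p ≤ m) : deg p ≤ deg m := by
  obtain ⟨q, rfl⟩ := exists_add_of_le h
  rw [deg_add]; exact Nat.le_add_right _ _

lemma deg_lt_of_add {p q m : ℕ →₀ ℕ} (h : p + q = m) (hq : q ≠ 0) : deg p < deg m := by
  subst h
  rw [deg_add]
  have : deg q ≠ 0 := fun h0 => hq (eq_zero_of_deg_eq_zero h0)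
  omega

/-- Coefficient of `X k * P`. -/
lemma coeff_X_mul' (k : ℕ) (m : ℕ →₀ ℕ) (P : MvPowerSeries ℕ ℚ) :
    coeff m (X k * P) =
      if Finsupp.single k 1 ≤ m then coeff (m - Finsupp.single k 1) P else 0 := by
  have hX : (X k : MvPowerSeries ℕ ℚ) = monomial (Finsupp.single k 1) 1 := rfl
  rw [hX, coeff_monomial_mul]
  split <;> simp

lemma coeff_X_mul_eq_zero {k : ℕ} {m : ℕ →₀ ℕ} (P : MvPowerSeries ℕ ℚ) (h : m k = 0) :
    coeff m (X k * P) = 0 := by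
  rw [coeff_X_mul', if_neg]
  intro hle
  have := Finsupp.single_le_iff.1 hle
  omega

/-- For a family whose `n`-th member is divisible by `X (n+1)`, the coefficientwise
sum, as a power series. -/
noncomputable def L (f : ℕ → MvPowerSeries ℕ ℚ) : MvPowerSeries ℕ ℚ :=
  fun m => ∑ n ∈ m.support.image (· - 1), coeff m (f n)

lemma coeff_L (f : ℕ → MvPowerSeries ℕ ℚ) (m : ℕ →₀ ℕ) :
    coeff m (L f) = ∑ n ∈ m.support.image (· - 1), coeff m (f n) := rfl

lemma coeff_L_zero (f : ℕ → MvPowerSeries ℕ ℚ) : coeff 0 (L f) = 0 := by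
  rw [coeff_L]
  simp

lemma hasSum_L (f : ℕ → MvPowerSeries ℕ ℚ)
    (hf : ∀ n m, m (n + 1) = 0 → coeff m (f n) = 0) : HasSum f (L f) := by
  refine Pi.hasSum.2 ?_
  intro m
  have : HasSum (fun n => coeff m (f n))
      (∑ n ∈ m.support.image (· - 1), coeff m (f n)) := by
    apply hasSum_sum_of_ne_finset_zero
    intro n hn
    apply hf
    by_contra h
    exact hn (Finset.mem_image.2 ⟨n + 1, Finsupp.mem_support_iff.2 h, by simp⟩)
  exact this

/-- Multiplication by a fixed series preserves `HasSum`. -/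
lemma hasSum_mul_left {f : ℕ → MvPowerSeries ℕ ℚ} {T : MvPowerSeries ℕ ℚ}
    (b : MvPowerSeries ℕ ℚ) (h : HasSum f T) : HasSum (fun n => b * f n) (b * T) := by
  replace h := Pi.hasSum.1 h
  refine Pi.hasSum.2 ?_
  intro m
  classical
  show HasSum (fun n => coeff m (b * f n)) (coeff m (b * T))
  simp only [coeff_mul]
  exact hasSum_sum fun p _ => (h p.2).mul_left _

/-- Coefficients of a product stay natural (degree-bounded version). -/
lemma niceUpTo_mul {e : ℕ} {P Q : MvPowerSeries ℕ ℚ}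
    (hP : ∀ m, deg m ≤ e → coeff m P ∈ Rng)
    (hQ : ∀ m, deg m ≤ e → coeff m Q ∈ Rng) :
    ∀ m, deg m ≤ e → coeff m (P * Q) ∈ Rng := by
  intro m hm
  classical
  rw [coeff_mul]
  apply Subsemiring.sum_mem
  intro p hp
  have hpq : p.1 + p.2 = m := Finset.HasAntidiagonal.mem_antidiagonal.1 hp
  have h1 : deg p.1 ≤ e := le_trans (by rw [← hpq, deg_add]; omega) hm
  have h2 : deg p.2 ≤ e := le_trans (by rw [← hpq, deg_add]; omega) hm
  exact mul_mem (hP _ h1) (hQ _ h2)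

lemma niceUpTo_one {e : ℕ} : ∀ m : ℕ →₀ ℕ, deg m ≤ e → coeff m (1 : MvPowerSeries ℕ ℚ) ∈ Rng := by
  intro m _
  classical
  rw [coeff_one]
  split
  · exact ⟨1, by simp⟩
  · exact ⟨0, by simp⟩

lemma niceUpTo_pow {e : ℕ} {P : MvPowerSeries ℕ ℚ}
    (hP : ∀ m, deg m ≤ e → coeff m P ∈ Rng) (k : ℕ) :
    ∀ m, deg m ≤ e → coeff m (P ^ k) ∈ Rng := by
  induction k with
  | zero => simpa using niceUpTo_one
  | succ k ih =>
    intro m hm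
    rw [pow_succ]
    exact niceUpTo_mul ih hP m hm

end GeodeAux

open GeodeAux

/-- Every coefficient of the Geode `G` is a nonnegative integer: for every finitely
supported monomial exponent function `m`, the coefficient of the corresponding monomial
in `G` lies in the image of `ℕ` in `ℚ`. -/
theorem geode_stmt2 (S G : MvPowerSeries ℕ ℚ)
    (hS : S = 1 + ∑' n : ℕ, (X (n + 1) : MvPowerSeries ℕ ℚ) * S ^ (n + 1))
    (hG : S - 1 = G * ∑' n : ℕ, (X (n + 1) : MvPowerSeries ℕ ℚ)) :
    ∀ m : ℕ →₀ ℕ, coeff m G ∈ Set.range ((↑·) : ℕ → ℚ) := by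
  classical
  -- the three summable families
  set f : ℕ → MvPowerSeries ℕ ℚ := fun n => X (n + 1) * S ^ (n + 1) with hf_def
  set g : ℕ → MvPowerSeries ℕ ℚ :=
    fun n => X (n + 1) * ∑ j ∈ Finset.range (n + 1), S ^ j with hg_def
  have hfSum : HasSum f (L f) :=
    hasSum_L f fun n m h => coeff_X_mul_eq_zero _ h
  have hgSum : HasSum g (L g) :=
    hasSum_L g fun n m h => coeff_X_mul_eq_zero _ h
  have hXdiv : ∀ (n : ℕ) (m : ℕ →₀ ℕ), m (n + 1) = 0 →
      coeff m (X (n + 1) : MvPowerSeries ℕ ℚ) = 0 := by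
    intro n m h
    rw [coeff_X, if_neg]
    intro hm
    rw [hm] at h
    simp at h
  have hXSum : HasSum (fun n => (X (n + 1) : MvPowerSeries ℕ ℚ)) (L fun n => X (n + 1)) :=
    hasSum_L _ hXdiv
  set LX : MvPowerSeries ℕ ℚ := L fun n => X (n + 1) with hLX_def
  set LA : MvPowerSeries ℕ ℚ := L g with hLA_def
  -- rewrite hypotheses with explicit sums
  rw [hfSum.tsum_eq] at hS
  rw [hXSum.tsum_eq] at hG
  -- naturality of S
  have hSnat : ∀ m : ℕ →₀ ℕ, coeff m S ∈ Rng := by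
    suffices H : ∀ d : ℕ, ∀ m : ℕ →₀ ℕ, deg m = d → coeff m S ∈ Rng by
      intro m; exact H (deg m) m rfl
    intro d
    induction d using Nat.strong_induction_on with
    | _ d IH =>
      intro m hm
      rw [hS, map_add, coeff_L]
      apply add_mem
      · rw [coeff_one]
        split
        · exact ⟨1, by simp⟩
        · exact ⟨0, by simp⟩
      · apply Subsemiring.sum_mem
        intro n _
        rw [hf_def, coeff_X_mul']
        split
        case isTrue hle =>
          have hne : (Finsupp.single (n + 1) 1 : ℕ →₀ ℕ) ≠ 0 :=
            fun hc => one_ne_zero (Finsupp.single_eq_zero.1 hc)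
          have hadd : (m - Finsupp.single (n + 1) 1) + Finsupp.single (n + 1) 1 = m :=
            tsub_add_cancel_of_le hle
          have hlt : deg (m - Finsupp.single (n + 1) 1) < d := by
            rw [← hm]; exact deg_lt_of_add hadd hne
          set e := deg (m - Finsupp.single (n + 1) 1) with he
          have hSe : ∀ m', deg m' ≤ e → coeff m' S ∈ Rng := by
            intro m' hm'
            exact IH (deg m') (lt_of_le_of_lt hm' hlt) m' rfl
          exact niceUpTo_pow hSe (n + 1) _ le_rfl
        case isFalse => exact ⟨0, by simp⟩
  -- termwise identity : f n = X (n+1) + (S - 1) * g n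
  have hterm : ∀ n : ℕ, f n = X (n + 1) + (S - 1) * g n := by
    intro n
    rw [hf_def, hg_def]
    have hgeo : (∑ j ∈ Finset.range (n + 1), S ^ j) * (S - 1) = S ^ (n + 1) - 1 :=
      geom_sum_mul S (n + 1)
    calc (X (n + 1) : MvPowerSeries ℕ ℚ) * S ^ (n + 1)
        = X (n + 1) + X (n + 1) * (S ^ (n + 1) - 1) := by ring
      _ = X (n + 1) + X (n + 1) * ((∑ j ∈ Finset.range (n + 1), S ^ j) * (S - 1)) := by
          rw [hgeo]
      _ = X (n + 1) + (S - 1) * (X (n + 1) * ∑ j ∈ Finset.range (n + 1), S ^ j) := by ring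
  -- second HasSum for f
  have hfSum2 : HasSum f (LX + (S - 1) * LA) := by
    have h1 := hXSum.add (hasSum_mul_left (S - 1) hgSum)
    have h2 : (fun n => (X (n + 1) : MvPowerSeries ℕ ℚ) + (S - 1) * g n) = f :=
      funext fun n => (hterm n).symm
    rwa [h2] at h1
  have hLf : L f = LX + (S - 1) * LA := hfSum.unique hfSum2
  -- the key equation  S - 1 = LX + (S-1) * LA
  have hS1 : S - 1 = LX + (S - 1) * LA := by
    conv_lhs => rw [hS, hLf]
    ring
  -- cancel LX
  have hLXne : LX ≠ 0 := by
    intro h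
    have h1 : coeff (Finsupp.single 1 1) LX = 0 := by rw [h, map_zero]
    rw [hLX_def, coeff_L] at h1
    have hsupp : (Finsupp.single 1 1 : ℕ →₀ ℕ).support = {1} :=
      Finsupp.support_single_ne_zero 1 one_ne_zero
    rw [hsupp] at h1
    have himg : ({1} : Finset ℕ).image (· - 1) = {0} := rfl
    rw [himg, Finset.sum_singleton] at h1
    rw [coeff_X, if_pos rfl] at h1
    exact one_ne_zero h1
  have hGrec : G = 1 + G * LA := by
    apply mul_left_cancel₀ hLXne
    have h3 : G * LX = LX + (G * LX) * LA := by rw [← hG]; exact hS1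
    linear_combination h3
  -- naturality of LA
  have hLAnat : ∀ m : ℕ →₀ ℕ, coeff m LA ∈ Rng := by
    intro m
    rw [hLA_def, coeff_L]
    apply Subsemiring.sum_mem
    intro n _
    rw [hg_def]
    have hXnice : ∀ m', deg m' ≤ deg m →
        coeff m' (X (n + 1) : MvPowerSeries ℕ ℚ) ∈ Rng := by
      intro m' _
      rw [coeff_X]
      split
      · exact ⟨1, by simp⟩
      · exact ⟨0, by simp⟩
    have hsumnice : ∀ m', deg m' ≤ deg m →
        coeff m' (∑ j ∈ Finset.range (n + 1), S ^ j) ∈ Rng := by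
      intro m' _
      rw [map_sum]
      apply Subsemiring.sum_mem
      intro j _
      exact niceUpTo_pow (e := deg m') (fun a _ => hSnat a) j m' le_rfl
    exact niceUpTo_mul hXnice hsumnice m le_rfl
  have hLA0 : coeff 0 LA = 0 := coeff_L_zero g
  -- final induction for G
  have hGnat : ∀ m : ℕ →₀ ℕ, coeff m G ∈ Rng := by
    suffices H : ∀ d : ℕ, ∀ m : ℕ →₀ ℕ, deg m = d → coeff m G ∈ Rng by
      intro m; exact H (deg m) m rfl
    intro d
    induction d using Nat.strong_induction_on with
    | _ d IH =>
      intro m hm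
      rw [hGrec, map_add, coeff_mul]
      apply add_mem
      · rw [coeff_one]
        split
        · exact ⟨1, by simp⟩
        · exact ⟨0, by simp⟩
      · apply Subsemiring.sum_mem
        intro p hp
        have hpq : p.1 + p.2 = m := Finset.HasAntidiagonal.mem_antidiagonal.1 hp
        by_cases hq : p.2 = 0
        · rw [hq, hLA0, mul_zero]
          exact ⟨0, by simp⟩
        · have hlt : deg p.1 < d := hm ▸ deg_lt_of_add hpq hq
          exact mul_mem (IH (deg p.1) hlt p.1 rfl) (hLAnat p.2)
  intro m
  obtain ⟨n, hn⟩ := hGnat m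
  exact ⟨n, hn⟩
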